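/- Let ℍⁿ be the n-fold product of the real quaternions, regarded as a right ℍ-module, with quaternionic Hermitian inner product and the associated real inner product given by its real part. Let v ∈ ℍⁿ be a unit vector and set V = v·Im ℍ = { v·q : q ∈ Im ℍ }, where Im ℍ is the space of purely imaginary quaternions. Then V is a 3-dimensional real subspace of ℍⁿ, and for every unit vector w ∈ V there exist pairwise orthogonal purely imaginary unit quaternions q₁, q₂, q₃ with q₁·q₂ = q₃ such that w·q₁ ∈ V, w·q₂ ∈ V, and w·q₃ is orthogonal to V. -/

import Mathlib

open Quaternion
open scoped RealInnerProductSpace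

/-- The submodule of purely imaginary quaternions. -/
def imH : Submodule ℝ (Quaternion ℝ) where
  carrier := {q | q.re = 0}
  add_mem' := by intro a b ha hb; simp only [Set.mem_setOf_eq] at *; simp [ha, hb]
  zero_mem' := by simp
  smul_mem' := by intro c q hq; simp only [Set.mem_setOf_eq] at *; simp [hq]

/-- The real-linear map `ℍ →ₗ[ℝ] ℍⁿ`, `q ↦ v·q` (componentwise right multiplication of
the fixed vector `v ∈ ℍⁿ` by the quaternion `q`). -/
noncomputable def lmulVec (n : ℕ) (v : PiLp 2 fun _ : Fin n => Quaternion ℝ) :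
    Quaternion ℝ →ₗ[ℝ] (PiLp 2 fun _ : Fin n => Quaternion ℝ) :=
  (WithLp.linearEquiv 2 ℝ (Fin n → Quaternion ℝ)).symm.toLinearMap ∘ₗ
    LinearMap.pi fun i => LinearMap.mulLeft ℝ (v i)

lemma QKA.mem_imH {q : Quaternion ℝ} : q ∈ imH ↔ q.re = 0 := Iff.rfl

lemma QKA.lmulVec_apply (n : ℕ) (v : PiLp 2 fun _ : Fin n => Quaternion ℝ)
    (q : Quaternion ℝ) (i : Fin n) : lmulVec n v q i = v i * q := rfl

lemma QKA.re_mul_comm (a b : Quaternion ℝ) : (a * b).re = (b * a).re := by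
  simp only [Quaternion.re_mul]; ring

lemma QKA.inner_eq_neg_mul_re {a b : Quaternion ℝ} (hb : b.re = 0) :
    ⟪a, b⟫ = -(a * b).re := by
  rw [Quaternion.inner_def, Quaternion.star_eq_neg.mpr hb, mul_neg, Quaternion.re_neg]

lemma QKA.mul_self_eq {p : Quaternion ℝ} (hp : p.re = 0) (hn : ‖p‖ = 1) : p * p = -1 := by
  have h := Quaternion.star_mul_self p
  rw [Quaternion.star_eq_neg.mpr hp] at h
  have h2 : Quaternion.normSq p = 1 := by
    rw [Quaternion.normSq_eq_norm_mul_self, hn]; ring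
  rw [h2] at h
  have h3 : -(p * p) = (1 : Quaternion ℝ) := by simpa using h
  exact neg_eq_iff_eq_neg.mp h3

lemma QKA.re_aux (a x y : Quaternion ℝ) :
    (a * x * star (a * y)).re = Quaternion.normSq a * (x * star y).re := by
  rw [star_mul, QKA.re_mul_comm, mul_assoc, ← mul_assoc (star a) a x,
    Quaternion.star_mul_self, Quaternion.coe_mul_eq_smul, mul_smul_comm,
    Quaternion.re_smul, smul_eq_mul, QKA.re_mul_comm]

lemma QKA.inner_lmulVec (n : ℕ) (v : PiLp 2 fun _ : Fin n => Quaternion ℝ) (hv : ‖v‖ = 1)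
    (x y : Quaternion ℝ) : ⟪lmulVec n v x, lmulVec n v y⟫ = ⟪x, y⟫ := by
  have hnv : ∑ i, ‖v i‖ ^ 2 = 1 := by
    rw [← PiLp.norm_sq_eq_of_L2, hv]; norm_num
  rw [PiLp.inner_apply]
  have : ∀ i, ⟪lmulVec n v x i, lmulVec n v y i⟫ = ‖v i‖ ^ 2 * ⟪x, y⟫ := by
    intro i
    rw [QKA.lmulVec_apply, QKA.lmulVec_apply, Quaternion.inner_def, QKA.re_aux,
      Quaternion.inner_def, Quaternion.normSq_eq_norm_mul_self, sq]
  rw [Finset.sum_congr rfl fun i _ => this i, ← Finset.sum_mul, hnv, one_mul]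

lemma QKA.norm_lmulVec (n : ℕ) (v : PiLp 2 fun _ : Fin n => Quaternion ℝ) (hv : ‖v‖ = 1)
    (x : Quaternion ℝ) : ‖lmulVec n v x‖ = ‖x‖ := by
  have h := QKA.inner_lmulVec n v hv x x
  rw [real_inner_self_eq_norm_mul_norm, real_inner_self_eq_norm_mul_norm] at h
  exact (mul_self_inj (norm_nonneg _) (norm_nonneg _)).mp h

lemma QKA.finrank_imH : Module.finrank ℝ imH = 3 := by
  have hker : imH = LinearMap.ker (show Quaternion ℝ →ₗ[ℝ] ℝ from QuaternionAlgebra.reₗ _ _ _) := by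
    ext q; simp [QKA.mem_imH, QuaternionAlgebra.reₗ, LinearMap.mem_ker]; exact Iff.rfl
  have hr := (show Quaternion ℝ →ₗ[ℝ] ℝ from
    QuaternionAlgebra.reₗ _ _ _).finrank_range_add_finrank_ker
  have hrange : LinearMap.range (show Quaternion ℝ →ₗ[ℝ] ℝ from QuaternionAlgebra.reₗ _ _ _) = ⊤ := by
    rw [LinearMap.range_eq_top]
    intro r
    exact ⟨(r : Quaternion ℝ), Quaternion.re_coe r⟩
  rw [hrange, finrank_top, Quaternion.finrank_eq_four] at hr
  have : Module.finrank ℝ ℝ = 1 := Module.finrank_self ℝ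
  rw [hker]
  omega

/-- For a unit vector `v ∈ ℍⁿ` the subspace `V = v·Im ℍ` is 3-dimensional and has
constant quaternionic Kähler angle `(0, 0, π/2)`: for every unit vector `w ∈ V` there
are pairwise orthogonal purely imaginary unit quaternions `q₁, q₂, q₃` with
`q₁·q₂ = q₃`, `w·q₁ ∈ V`, `w·q₂ ∈ V` and `w·q₃` orthogonal to `V`. -/
theorem v_mul_imH_quaternionic_kahler_angle
    (n : ℕ) (v : PiLp 2 fun _ : Fin n => Quaternion ℝ) (hv : ‖v‖ = 1) :
    Module.finrank ℝ (Submodule.map (lmulVec n v) imH) = 3 ∧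
    ∀ w ∈ Submodule.map (lmulVec n v) imH, ‖w‖ = 1 →
      ∃ q₁ q₂ q₃ : Quaternion ℝ,
        q₁.re = 0 ∧ q₂.re = 0 ∧ q₃.re = 0 ∧
        ‖q₁‖ = 1 ∧ ‖q₂‖ = 1 ∧ ‖q₃‖ = 1 ∧
        ⟪q₁, q₂⟫ = 0 ∧ ⟪q₁, q₃⟫ = 0 ∧ ⟪q₂, q₃⟫ = 0 ∧
        q₁ * q₂ = q₃ ∧
        (WithLp.toLp 2 fun i => w i * q₁) ∈ Submodule.map (lmulVec n v) imH ∧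
        (WithLp.toLp 2 fun i => w i * q₂) ∈ Submodule.map (lmulVec n v) imH ∧
        ∀ u ∈ Submodule.map (lmulVec n v) imH,
          ⟪(show PiLp 2 (fun _ : Fin n => Quaternion ℝ) from WithLp.toLp 2 fun i => w i * q₃), u⟫ = 0 := by
  have hv0 : v ≠ 0 := by
    intro h; rw [h, norm_zero] at hv; exact one_ne_zero hv.symm
  have hinj : Function.Injective (lmulVec n v) := by
    intro x y hxy
    obtain ⟨i, hi⟩ : ∃ i, v i ≠ 0 := by
      by_contra h
      push_neg at h
      exact hv0 (PiLp.ext h)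
    have := congrArg (fun f : PiLp 2 (fun _ : Fin n => Quaternion ℝ) => f i) hxy
    exact mul_left_cancel₀ hi this
  constructor
  · rw [← (Submodule.equivMapOfInjective (lmulVec n v) hinj imH).finrank_eq]
    exact QKA.finrank_imH
  · rintro w ⟨p, hpim, hpw⟩ hw1
    have hpre : p.re = 0 := hpim
    have hp1 : ‖p‖ = 1 := by
      rw [← hw1, ← hpw, QKA.norm_lmulVec n v hv]
    have hp0 : p ≠ 0 := by
      intro h; rw [h, norm_zero] at hp1; exact one_ne_zero hp1.symm
    -- find a unit imaginary quaternion orthogonal to p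
    obtain ⟨u, humem, hu0⟩ : ∃ u : Quaternion ℝ, u ∈ imH ⊓ (ℝ ∙ p)ᗮ ∧ u ≠ 0 := by
      have h1 : Module.finrank ℝ (ℝ ∙ p) = 1 := finrank_span_singleton hp0
      have h2 := Submodule.finrank_add_finrank_orthogonal (K := (ℝ ∙ p))
      rw [h1, Quaternion.finrank_eq_four] at h2
      have h3 := Submodule.finrank_sup_add_finrank_inf_eq imH (ℝ ∙ p)ᗮ
      have h4 : Module.finrank ℝ ↥(imH ⊔ (ℝ ∙ p)ᗮ) ≤ 4 := by
        rw [← Quaternion.finrank_eq_four (R := ℝ)]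
        exact Submodule.finrank_le _
      rw [QKA.finrank_imH] at h3
      have h5 : 0 < Module.finrank ℝ ↥(imH ⊓ (ℝ ∙ p)ᗮ) := by omega
      have h6 : imH ⊓ (ℝ ∙ p)ᗮ ≠ ⊥ := by
        intro h
        rw [h, finrank_bot] at h5
        exact lt_irrefl 0 h5
      exact Submodule.exists_mem_ne_zero_of_ne_bot h6
    obtain ⟨huim, huperp⟩ := humem
    have hup : ⟪u, p⟫ = 0 := by
      rw [real_inner_comm]
      exact huperp p (Submodule.mem_span_singleton_self p)
    set q₁ : Quaternion ℝ := ‖u‖⁻¹ • u with hq₁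
    have hu0' : ‖u‖ ≠ 0 := norm_ne_zero_iff.mpr hu0
    have hq₁re : q₁.re = 0 := by
      rw [hq₁, Quaternion.re_smul, huim, smul_zero]
    have hq₁n : ‖q₁‖ = 1 := by
      rw [hq₁, norm_smul, norm_inv, norm_norm, inv_mul_cancel₀ hu0']
    have hq₁p : ⟪q₁, p⟫ = 0 := by
      rw [hq₁, real_inner_smul_left, hup, mul_zero]
    set q₂ : Quaternion ℝ := -(q₁ * p) with hq₂
    have hq₁sq : q₁ * q₁ = -1 := QKA.mul_self_eq hq₁re hq₁n
    have hpsq : p * p = -1 := QKA.mul_self_eq hpre hp1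
    have hq₂re : q₂.re = 0 := by
      have : (q₁ * p).re = 0 := by
        have := QKA.inner_eq_neg_mul_re (a := q₁) hpre
        rw [hq₁p] at this
        linarith
      rw [hq₂, Quaternion.re_neg, this, neg_zero]
    have hq₂n : ‖q₂‖ = 1 := by
      rw [hq₂, norm_neg, norm_mul, hq₁n, hp1, mul_one]
    have hq₁q₂ : q₁ * q₂ = p := by
      rw [hq₂, mul_neg, ← mul_assoc, hq₁sq]
      simp
    have hq₂p : ⟪q₂, p⟫ = 0 := by
      rw [QKA.inner_eq_neg_mul_re hpre, hq₂, neg_mul, mul_assoc, hpsq]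
      simp [hq₁re]
    refine ⟨q₁, q₂, p, hq₁re, hq₂re, hpre, hq₁n, hq₂n, hp1, ?_, hq₁p, hq₂p, hq₁q₂, ?_, ?_, ?_⟩
    · -- ⟪q₁, q₂⟫ = 0
      rw [QKA.inner_eq_neg_mul_re hq₂re, hq₁q₂, hpre, neg_zero]
    · -- w·q₁ ∈ V
      refine ⟨p * q₁, ?_, ?_⟩
      · show (p * q₁).re = 0
        have := QKA.inner_eq_neg_mul_re (a := p) hq₁re
        rw [real_inner_comm, hq₁p] at this
        linarith
      · refine PiLp.ext fun i => ?_
        show v i * (p * q₁) = w i * q₁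
        rw [← hpw]
        show v i * (p * q₁) = v i * p * q₁
        rw [mul_assoc]
    · -- w·q₂ ∈ V
      refine ⟨p * q₂, ?_, ?_⟩
      · show (p * q₂).re = 0
        have := QKA.inner_eq_neg_mul_re (a := p) hq₂re
        rw [real_inner_comm, hq₂p] at this
        linarith
      · refine PiLp.ext fun i => ?_
        show v i * (p * q₂) = w i * q₂
        rw [← hpw]
        show v i * (p * q₂) = v i * p * q₂
        rw [mul_assoc]
    · -- w·q₃ orthogonal to V
      rintro x ⟨y, hyim, hyx⟩
      have hwq : (show PiLp 2 (fun _ : Fin n => Quaternion ℝ) from WithLp.toLp 2 fun i => w i * p)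
          = lmulVec n v (-1) := by
        refine PiLp.ext fun i => ?_
        show w i * p = v i * (-1)
        rw [← hpw]
        show v i * p * p = v i * (-1)
        rw [mul_assoc, hpsq]
      rw [hwq, ← hyx, QKA.inner_lmulVec n v hv, Quaternion.inner_def]
      have hyre : y.re = 0 := hyim
      simp [Quaternion.re_mul, hyre]
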